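/- Let n ≢ 0 (mod 4), let C ⊆ ℤ/nℤ be skew-symmetric (i.e., a ∈ C implies −a ∉ C, and 0 ∉ C), and suppose that for every j with 0 ≤ j ≤ n−1 the number μ_j = i·∑_{k∈C}(w^{jk} − w^{−jk}) is rational, where w = e^{2πi/n}. Then C = ∅. -/

import Mathlib

open Finset

open Finset

private lemma geom_sum_root {n : ℕ} {z : ℂ} (hz : z ^ n = 1) :
    ∑ j ∈ Finset.range n, z ^ j = if z = 1 then (n : ℂ) else 0 := by
  split_ifs with h
  · simp [h]
  · rw [geom_sum_eq h, hz, sub_self, zero_div]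

private lemma totient_lcm_four {n : ℕ} (hn : 0 < n) (h4 : n % 4 ≠ 0) :
    Nat.totient (Nat.lcm n 4) = 2 * Nat.totient n := by
  rcases Nat.even_or_odd n with he | ho
  · obtain ⟨m, rfl⟩ : ∃ m, n = 2 * m := ⟨n / 2, by
      have := he.two_dvd
      omega⟩
    have hmo : m % 2 = 1 := by omega
    have hco : Nat.Coprime m 2 := Nat.coprime_two_right.2 (Nat.odd_iff.2 hmo)
    have h4eq : (4 : ℕ) = 2 * 2 := rfl
    have hl : Nat.lcm (2 * m) 4 = 2 * (m * 2) := by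
      rw [h4eq, Nat.lcm_mul_left, hco.lcm_eq_mul]
    have hc4 : Nat.Coprime 4 m := by
      have := (Nat.coprime_comm.1 hco).pow_left 2
      simpa [h4eq, pow_two] using this
    have hc2 : Nat.Coprime 2 m := Nat.coprime_two_left.2 (Nat.odd_iff.2 hmo)
    rw [hl, show 2 * (m * 2) = 4 * m by ring, Nat.totient_mul hc4, Nat.totient_mul hc2,
      show Nat.totient 4 = 2 from by decide, show Nat.totient 2 = 1 from by decide]
    ring
  · have h2 : Nat.Coprime n 2 := Nat.coprime_two_right.2 ho
    have h4' : Nat.Coprime n 4 := by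
      have := h2.pow_right 2
      simpa [show (2:ℕ)^2 = 4 by norm_num] using this
    rw [h4'.lcm_eq_mul, Nat.totient_mul h4', show Nat.totient 4 = 2 from by decide]
    ring

private lemma I_adjoin_contradiction {n : ℕ} (hn : 0 < n) (h4 : n % 4 ≠ 0)
    (hI : Complex.I ∈ IntermediateField.adjoin ℚ
      ({Complex.exp (2 * Real.pi * Complex.I / n)} : Set ℂ)) : False := by
  set ζ : ℂ := Complex.exp (2 * Real.pi * Complex.I / n) with hζdef
  set L : ℕ := Nat.lcm n 4 with hLdef
  set η : ℂ := Complex.exp (2 * Real.pi * Complex.I / L) with hηdef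
  clear_value ζ L η
  have hζ : IsPrimitiveRoot ζ n := by
    rw [hζdef]; exact Complex.isPrimitiveRoot_exp n hn.ne'
  have hζK : ζ ∈ IntermediateField.adjoin ℚ ({ζ} : Set ℂ) :=
    IntermediateField.subset_adjoin ℚ _ rfl
  have hL0 : 0 < L := by
    rw [hLdef]
    exact Nat.pos_of_ne_zero (Nat.lcm_ne_zero hn.ne' (by norm_num))
  have hη : IsPrimitiveRoot η L := by
    rw [hηdef]; exact Complex.isPrimitiveRoot_exp L hL0.ne'
  have hn0 : (n : ℂ) ≠ 0 := Nat.cast_ne_zero.2 hn.ne'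
  have hL0' : (L : ℂ) ≠ 0 := Nat.cast_ne_zero.2 hL0.ne'
  -- I = exp(2πi/4)
  have hI4 : Complex.exp (2 * (Real.pi : ℂ) * Complex.I / 4) = Complex.I := by
    have h : (2 * (Real.pi : ℂ) * Complex.I / 4) = ((Real.pi / 2 : ℝ) : ℂ) * Complex.I := by
      push_cast; ring
    rw [h, Complex.exp_mul_I, ← Complex.ofReal_cos, ← Complex.ofReal_sin,
      Real.cos_pi_div_two, Real.sin_pi_div_two]
    simp
  -- Bezout
  have hbez : (Nat.gcd n 4 : ℤ) = n * Nat.gcdA n 4 + 4 * Nat.gcdB n 4 := Nat.gcd_eq_gcd_ab n 4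
  have hglcm : (Nat.gcd n 4 : ℤ) * L = n * 4 := by
    rw [hLdef]; exact_mod_cast Nat.gcd_mul_lcm n 4
  have hkey : ((n : ℂ) * (Nat.gcdA n 4 : ℤ) + 4 * (Nat.gcdB n 4 : ℤ)) * L = n * 4 := by
    rw [hbez] at hglcm
    exact_mod_cast hglcm
  have hηeq : η = ζ ^ (Nat.gcdB n 4) * Complex.I ^ (Nat.gcdA n 4) := by
    rw [← hI4, hζdef, hηdef, ← Complex.exp_int_mul, ← Complex.exp_int_mul, ← Complex.exp_add]
    congr 1
    field_simp
    linear_combination (-1 : ℂ) * hkey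
  have hηK : η ∈ IntermediateField.adjoin ℚ ({ζ} : Set ℂ) := by
    rw [hηeq]
    exact mul_mem (zpow_mem hζK _) (zpow_mem hI _)
  -- ζ ∈ ℚ⟮η⟯
  have hdn : n ∣ L := hLdef ▸ Nat.dvd_lcm_left n 4
  have hζη : ζ = η ^ (L / n) := by
    rw [hηdef, hζdef, ← Complex.exp_nat_mul]
    congr 1
    have hmul : ((L / n : ℕ) : ℂ) * n = (L : ℂ) := by exact_mod_cast Nat.div_mul_cancel hdn
    field_simp
    linear_combination (-1 : ℂ) * hmul
  have hζE : ζ ∈ IntermediateField.adjoin ℚ ({η} : Set ℂ) := by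
    rw [hζη]
    exact pow_mem (IntermediateField.subset_adjoin ℚ {η} rfl) _
  have heq : IntermediateField.adjoin ℚ ({η} : Set ℂ) = IntermediateField.adjoin ℚ ({ζ} : Set ℂ) :=
    le_antisymm (IntermediateField.adjoin_le_iff.2 (Set.singleton_subset_iff.2 hηK))
      (IntermediateField.adjoin_le_iff.2 (Set.singleton_subset_iff.2 hζE))
  have hζint : IsIntegral ℚ ζ := (hζ.isIntegral hn).tower_top
  have hηint : IsIntegral ℚ η := (hη.isIntegral hL0).tower_top
  have hfK : Module.finrank ℚ (IntermediateField.adjoin ℚ ({ζ} : Set ℂ)) = n.totient := by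
    rw [IntermediateField.adjoin.finrank hζint, ← Polynomial.cyclotomic_eq_minpoly_rat hζ hn,
      Polynomial.natDegree_cyclotomic]
  have hfE : Module.finrank ℚ (IntermediateField.adjoin ℚ ({η} : Set ℂ)) = L.totient := by
    rw [IntermediateField.adjoin.finrank hηint, ← Polynomial.cyclotomic_eq_minpoly_rat hη hL0,
      Polynomial.natDegree_cyclotomic]
  rw [heq, hfK] at hfE
  have htot : L.totient = 2 * Nat.totient n := by
    rw [hLdef]
    exact totient_lcm_four hn h4
  have hpos : 0 < n.totient := Nat.totient_pos.2 hn
  omega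

theorem stmt15 (n : ℕ) (hn : 0 < n) (h4 : n % 4 ≠ 0) (C : Finset (ZMod n))
    (h0 : (0 : ZMod n) ∉ C) (hskew : ∀ a ∈ C, -a ∉ C)
    (hrat : ∀ j : ℕ, j ≤ n - 1 → ∃ r : ℚ,
      Complex.I * ∑ k ∈ C,
        ((Complex.exp (2 * Real.pi * Complex.I / n)) ^ (j * (ZMod.val k)) -
         (Complex.exp (2 * Real.pi * Complex.I / n))⁻¹ ^ (j * (ZMod.val k))) = (r : ℂ)) :
    C = ∅ := by
  classical
  by_contra hC
  obtain ⟨a, ha⟩ := Finset.nonempty_iff_ne_empty.2 hC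
  haveI : NeZero n := ⟨hn.ne'⟩
  set ζ : ℂ := Complex.exp (2 * Real.pi * Complex.I / n) with hζdef
  have hζ : IsPrimitiveRoot ζ n := Complex.isPrimitiveRoot_exp n hn.ne'
  have hζ0 : ζ ≠ 0 := Complex.exp_ne_zero _
  have hζn : ζ ^ n = 1 := hζ.pow_eq_one
  -- choose rationals
  set r : ℕ → ℚ := fun j => if h : j ≤ n - 1 then (hrat j h).choose else 0 with hrdef
  have hr : ∀ j ∈ Finset.range n,
      Complex.I * ∑ k ∈ C, (ζ ^ (j * k.val) - ζ⁻¹ ^ (j * k.val)) = ((r j : ℚ) : ℂ) := by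
    intro j hj
    have hj' : j ≤ n - 1 := Nat.le_sub_one_of_lt (Finset.mem_range.1 hj)
    rw [hrdef]
    simp only [dif_pos hj']
    exact (hrat j hj').choose_spec
  have hz : ∀ (m : ℤ) (j : ℕ), (ζ ^ m) ^ j = ζ ^ (m * j) := fun m j => by
    rw [← zpow_natCast (ζ ^ m) j, ← zpow_mul]
  -- the key rewrite of each summand
  have key : ∀ j ∈ Finset.range n,
      ζ⁻¹ ^ (j * a.val) * ∑ k ∈ C, (ζ ^ (j * k.val) - ζ⁻¹ ^ (j * k.val))
      = ∑ k ∈ C, ((ζ ^ ((k.val : ℤ) - a.val)) ^ j - (ζ ^ (-((k.val : ℤ) + a.val))) ^ j) := by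
    intro j _
    rw [Finset.mul_sum]
    refine Finset.sum_congr rfl fun k _ => ?_
    rw [mul_sub]
    congr 1
    · rw [hz, inv_pow, ← zpow_natCast ζ (j * a.val), ← zpow_natCast ζ (j * k.val), ← zpow_neg,
        ← zpow_add₀ hζ0]
      congr 1
      push_cast
      ring
    · rw [hz, ← pow_add, inv_pow, ← zpow_natCast ζ (j * a.val + j * k.val), ← zpow_neg]
      congr 1
      push_cast
      ring
  -- evaluate the double sum
  have S1 : ∑ j ∈ Finset.range n,
      ζ⁻¹ ^ (j * a.val) * ∑ k ∈ C, (ζ ^ (j * k.val) - ζ⁻¹ ^ (j * k.val)) = (n : ℂ) := by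
    rw [Finset.sum_congr rfl key, Finset.sum_comm]
    have hsum : ∀ k ∈ C,
        ∑ j ∈ Finset.range n,
          ((ζ ^ ((k.val : ℤ) - a.val)) ^ j - (ζ ^ (-((k.val : ℤ) + a.val))) ^ j)
        = if k = a then (n : ℂ) else 0 := by
      intro k hk
      have hzn1 : (ζ ^ ((k.val : ℤ) - a.val)) ^ n = 1 := by
        rw [← zpow_natCast _ n, ← zpow_mul, mul_comm, zpow_mul, zpow_natCast, hζn, one_zpow]
      have hzn2 : (ζ ^ (-((k.val : ℤ) + a.val))) ^ n = 1 := by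
        rw [← zpow_natCast _ n, ← zpow_mul, mul_comm, zpow_mul, zpow_natCast, hζn, one_zpow]
      rw [Finset.sum_sub_distrib, geom_sum_root hzn1, geom_sum_root hzn2]
      have e1 : (ζ ^ ((k.val : ℤ) - a.val) = 1) ↔ k = a := by
        rw [hζ.zpow_eq_one_iff_dvd, ← ZMod.intCast_zmod_eq_zero_iff_dvd]
        push_cast
        rw [ZMod.natCast_val, ZMod.natCast_val, ZMod.cast_id, ZMod.cast_id, sub_eq_zero]
      have e2 : ζ ^ (-((k.val : ℤ) + a.val)) ≠ 1 := by
        intro h1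
        rw [hζ.zpow_eq_one_iff_dvd, dvd_neg, ← ZMod.intCast_zmod_eq_zero_iff_dvd] at h1
        push_cast at h1
        rw [ZMod.natCast_val, ZMod.natCast_val, ZMod.cast_id, ZMod.cast_id] at h1
        have hadd := h1
        have : k = -a := by linear_combination hadd
        rw [this] at hk
        exact hskew a ha (by simpa using hk)
      rw [if_neg e2]
      by_cases hka : k = a
      · rw [if_pos (e1.2 hka), if_pos hka, sub_zero]
      · rw [if_neg (fun h => hka (e1.1 h)), if_neg hka, sub_zero]
    rw [Finset.sum_congr rfl hsum, Finset.sum_ite_eq' C a fun _ => (n : ℂ), if_pos ha]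
  -- hence I * n is a rational combination of powers of ζ
  have S2 : ∑ j ∈ Finset.range n, ζ⁻¹ ^ (j * a.val) * ((r j : ℚ) : ℂ) = Complex.I * n := by
    calc ∑ j ∈ Finset.range n, ζ⁻¹ ^ (j * a.val) * ((r j : ℚ) : ℂ)
        = ∑ j ∈ Finset.range n, Complex.I *
            (ζ⁻¹ ^ (j * a.val) * ∑ k ∈ C, (ζ ^ (j * k.val) - ζ⁻¹ ^ (j * k.val))) := by
          refine Finset.sum_congr rfl fun j hj => ?_
          rw [← hr j hj]
          ring
      _ = Complex.I * ∑ j ∈ Finset.range n,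
            ζ⁻¹ ^ (j * a.val) * ∑ k ∈ C, (ζ ^ (j * k.val) - ζ⁻¹ ^ (j * k.val)) := by
          rw [Finset.mul_sum]
      _ = Complex.I * n := by rw [S1]
  -- I belongs to ℚ(ζ)
  have hζK : ζ ∈ IntermediateField.adjoin ℚ ({ζ} : Set ℂ) :=
    IntermediateField.subset_adjoin ℚ _ rfl
  have hIn : Complex.I * n ∈ IntermediateField.adjoin ℚ ({ζ} : Set ℂ) := by
    rw [← S2]
    refine sum_mem fun j _ => mul_mem (pow_mem (inv_mem hζK) _) ?_
    exact SubfieldClass.ratCast_mem _ _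
  have hn0 : (n : ℂ) ≠ 0 := Nat.cast_ne_zero.2 hn.ne'
  have hI : Complex.I ∈ IntermediateField.adjoin ℚ ({ζ} : Set ℂ) := by
    have : Complex.I = Complex.I * n * ((n : ℂ))⁻¹ := by field_simp
    rw [this]
    exact mul_mem hIn (inv_mem (natCast_mem _ _))
  exact I_adjoin_contradiction hn h4 hI
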